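/- The image of L̂⊗L̂ under the cyclic symmetrization operator N equals the kernel of the bracket map H⊗L̂ → L̂, X⊗u ↦ [X,u], where L̂ is the completed free Lie algebra generated by H inside the completed tensor algebra. -/

import Mathlib

/-! Model of the completed tensor algebra `T̂` of `H = ℚ^d`: an element of `T̂`
is a function assigning to each word in the basis letters (elements of `Fin d`)
its coefficient. -/

namespace Paper

/-- words in the basis letters of `H` -/
abbrev Word (d : ℕ) := List (Fin d)

/-- the completed tensor algebra, as coefficient functions on words -/
abbrev Ten (d : ℕ) := Word d → ℚ

variable {d : ℕ}

/-- the unit `1 ∈ T̂` -/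
def oneT : Ten d := fun w => if w = [] then 1 else 0

/-- the (concatenation) product of `T̂` -/
def mulT (f g : Ten d) : Ten d :=
  fun w => ∑ k ∈ Finset.range (w.length + 1), f (List.take k w) * g (List.drop k w)

/-- the commutator bracket `[a,b] = ab - ba` -/
def brT (f g : Ten d) : Ten d := mulT f g - mulT g f

/-- powers -/
def powT (f : Ten d) : ℕ → Ten d
  | 0 => oneT
  | n + 1 => mulT f (powT f n)

/-- the cyclic symmetrization operator `N`, with `N|_{H^{⊗p}} = ∑_{m<p} ν^m`
and `N = 0` in degree `0`. -/
def Nop (f : Ten d) : Ten d := fun w => ∑ m ∈ Finset.range w.length, f (w.rotate m)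

/-- the cyclic permutation `ν` -/
def nuT (f : Ten d) : Ten d := fun w => f (w.rotate (w.length - 1))

/-- being an element of `H ⊂ T̂` (homogeneous of degree 1) -/
def deg1 (f : Ten d) : Prop := ∀ w : Word d, w.length ≠ 1 → f w = 0

/-- the basis letter `i`, as a degree-one element of `T̂` -/
def singT (i : Fin d) : Ten d := fun w => if w = [i] then 1 else 0

/-- the right-normed iterated bracket `[x₁,[x₂,[⋯,[x_{k-1},x_k]⋯]]]` of a list
of elements of `T̂` (a single element for a singleton, `0` for the empty list). -/
def rightBr : List (Ten d) → Ten d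
  | [] => 0
  | [x] => x
  | x :: l => brT x (rightBr l)

/-- the left-normed iterated bracket `[⋯[[x,y₁],y₂],⋯,y_k]`. -/
def leftBr (x : Ten d) (l : List (Ten d)) : Ten d := l.foldl brT x

/-- the right-normed bracket of the letters of a word -/
def PhiWord : Word d → Ten d
  | [] => 0
  | [x] => singT x
  | x :: l => brT (singT x) (PhiWord l)

/-- the degree-`p` truncation (homogeneous part) of an element of `T̂` -/
def truncT (p : ℕ) (f : Ten d) : Ten d := fun w => if w.length = p then f w else 0

/-- the degree-`p` part `𝓛_p` of the free Lie algebra generated by `H` inside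
`T̂` (spanned by the right-normed brackets of words of length `p`) -/
def LieN (d p : ℕ) : Submodule ℚ (Ten d) :=
  Submodule.span ℚ {g : Ten d | ∃ w : Word d, w.length = p ∧ g = PhiWord w}

/-- membership in the completed free Lie algebra `𝓛̂ ⊂ T̂`: every homogeneous
component is a Lie element. -/
def memLhat (f : Ten d) : Prop := ∀ p : ℕ, truncT p f ∈ LieN d p

/-- membership in (the closure of) `H ⊗ 𝓛̂ ⊂ T̂₁`. -/
def memHLhat (f : Ten d) : Prop :=
  ∀ p : ℕ, truncT p f ∈ Submodule.span ℚ
    {g : Ten d | ∃ X v : Ten d, deg1 X ∧ memLhat v ∧ g = mulT X v}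

/-- membership in (the closure of) `𝓛̂ ⊗ 𝓛̂ ⊂ T̂`. -/
def memLLhat (f : Ten d) : Prop :=
  ∀ p : ℕ, truncT p f ∈ Submodule.span ℚ
    {g : Ten d | ∃ u v : Ten d, memLhat u ∧ memLhat v ∧ g = mulT u v}

/-- the bracket map `H ⊗ T̂ → T̂`, `X ⊗ u ↦ [X,u] = Xu - uX`, in coefficients:
the `uX`-part of an element `f = ∑ X ⊗ u_X` of `H ⊗ T̂ = T̂₁` has coefficient
at `w` equal to `f` of the backwards rotation of `w`. -/
def brMap (f : Ten d) : Ten d := fun w => f w - f (w.rotate (w.length - 1))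

-- ############ Section A : basic algebra of mulT ############

lemma mulT_apply_nil (f g : Ten d) : mulT f g [] = f [] * g [] := by
  simp [mulT]

lemma mulT_add_left (f g h : Ten d) : mulT (f + g) h = mulT f h + mulT g h := by
  funext w
  simp [mulT, add_mul, Finset.sum_add_distrib]

lemma mulT_add_right (f g h : Ten d) : mulT f (g + h) = mulT f g + mulT f h := by
  funext w
  simp [mulT, mul_add, Finset.sum_add_distrib]

lemma mulT_zero_left (f : Ten d) : mulT 0 f = 0 := by
  funext w; simp [mulT]

lemma mulT_zero_right (f : Ten d) : mulT f 0 = 0 := by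
  funext w; simp [mulT]

lemma mulT_neg_left (f g : Ten d) : mulT (-f) g = -mulT f g := by
  funext w; simp [mulT, Finset.sum_neg_distrib]

lemma mulT_neg_right (f g : Ten d) : mulT f (-g) = -mulT f g := by
  funext w; simp [mulT, Finset.sum_neg_distrib]

lemma mulT_sub_left (f g h : Ten d) : mulT (f - g) h = mulT f h - mulT g h := by
  funext w
  simp [mulT, sub_mul, Finset.sum_sub_distrib]

lemma mulT_sub_right (f g h : Ten d) : mulT f (g - h) = mulT f g - mulT f h := by
  funext w
  simp [mulT, mul_sub, Finset.sum_sub_distrib]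

lemma mulT_smul_left (c : ℚ) (f g : Ten d) : mulT (c • f) g = c • mulT f g := by
  funext w
  simp [mulT, Finset.mul_sum, mul_assoc]

lemma mulT_smul_right (c : ℚ) (f g : Ten d) : mulT f (c • g) = c • mulT f g := by
  funext w
  simp [mulT, Finset.mul_sum, mul_assoc]
  congr 1; funext k; ring

lemma oneT_mulT (f : Ten d) : mulT oneT f = f := by
  funext w
  rw [mulT]
  rw [Finset.sum_eq_single 0]
  · simp [oneT]
  · intro k hk hk0
    have : List.take k w ≠ [] := by
      rcases w with _ | ⟨x, t⟩
      · simp at hk; omega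
      · cases k with
        | zero => omega
        | succ n => simp
    simp [oneT, this]
  · intro h; simp at h

lemma mulT_oneT (f : Ten d) : mulT f oneT = f := by
  funext w
  rw [mulT]
  rw [Finset.sum_eq_single w.length]
  · simp [oneT]
  · intro k hk hk0
    simp only [Finset.mem_range] at hk
    have hkl : k < w.length := by omega
    have : List.drop k w ≠ [] := by
      intro h
      have := congrArg List.length h
      simp at this; omega
    simp [oneT, this]
  · intro h; simp at h


lemma mulT_assoc (f g h : Ten d) : mulT (mulT f g) h = mulT f (mulT g h) := by
  funext w
  set n := w.length with hn
  have L : mulT (mulT f g) h w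
      = ∑ k ∈ Finset.range (n+1), ∑ j ∈ Finset.range (k+1),
          f (List.take j w) * g (List.take (k - j) (List.drop j w)) * h (List.drop k w) := by
    rw [mulT]
    apply Finset.sum_congr rfl
    intro k hk
    simp only [Finset.mem_range] at hk
    rw [mulT, Finset.sum_mul]
    have hlen : (List.take k w).length = k := by
      rw [List.length_take]; omega
    rw [hlen]
    apply Finset.sum_congr rfl
    intro j hj
    simp only [Finset.mem_range] at hj
    rw [List.take_take, List.drop_take, show j ⊓ k = j by omega]
  have R : mulT f (mulT g h) w
      = ∑ j ∈ Finset.range (n+1), ∑ i ∈ Finset.range (n - j + 1),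
          f (List.take j w) * g (List.take i (List.drop j w)) * h (List.drop (j + i) w) := by
    rw [mulT]
    apply Finset.sum_congr rfl
    intro j hj
    simp only [Finset.mem_range] at hj
    rw [mulT, Finset.mul_sum]
    have hlen : (List.drop j w).length = n - j := by rw [List.length_drop]
    rw [hlen]
    apply Finset.sum_congr rfl
    intro i hi
    rw [List.drop_drop]
    ring
  rw [L, R, Finset.sum_sigma' (Finset.range (n+1)) (fun k => Finset.range (k+1)),
    Finset.sum_sigma' (Finset.range (n+1)) (fun j => Finset.range (n - j + 1))]
  apply Finset.sum_nbij' (i := fun x => ⟨x.2, x.1 - x.2⟩) (j := fun x => ⟨x.1 + x.2, x.1⟩)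
  · rintro ⟨k, j⟩ hx
    simp only [Finset.mem_sigma, Finset.mem_range] at hx ⊢
    omega
  · rintro ⟨j, i⟩ hx
    simp only [Finset.mem_sigma, Finset.mem_range] at hx ⊢
    omega
  · rintro ⟨k, j⟩ hx
    simp only [Finset.mem_sigma, Finset.mem_range] at hx
    dsimp only
    rw [show j + (k - j) = k by omega]
  · rintro ⟨a, b⟩ hx
    simp only [Finset.mem_sigma, Finset.mem_range] at hx
    dsimp only
    rw [show a + b - a = b by omega]
  · rintro ⟨k, j⟩ hx
    simp only [Finset.mem_sigma, Finset.mem_range] at hx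
    dsimp only
    rw [show j + (k - j) = k by omega]

-- ############ Section B : wordT ############

def wordT (u : Word d) : Ten d := fun w => if w = u then 1 else 0

lemma singT_eq_wordT (i : Fin d) : singT i = wordT [i] := rfl

lemma oneT_eq_wordT : (oneT : Ten d) = wordT [] := rfl

lemma wordT_mulT (u v : Word d) : mulT (wordT u) (wordT v) = wordT (u ++ v) := by
  funext w
  rw [mulT]
  rw [Finset.sum_eq_single u.length]
  · by_cases h : w = u ++ v
    · subst h
      rw [List.take_left' rfl, List.drop_left' rfl]
      simp [wordT]
    · have : ¬(List.take u.length w = u ∧ List.drop u.length w = v) := by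
        intro ⟨h1, h2⟩
        exact h (by rw [← h1, ← h2, List.take_append_drop])
      rcases not_and_or.mp this with h1 | h1 <;> simp [wordT, h1, h]
  · intro k hk hku
    have : List.take k w ≠ u := by
      intro he
      have := congrArg List.length he
      simp only [List.length_take] at this
      simp only [Finset.mem_range] at hk
      omega
    simp [wordT, this]
  · intro hc
    simp only [Finset.mem_range, not_lt] at hc
    have : List.take u.length w ≠ u := by
      intro he
      have := congrArg List.length he
      simp only [List.length_take] at this
      omega
    simp [wordT, this]

-- ############ Section C : Nop and truncT basics ############

lemma Nop_apply_nil (f : Ten d) : Nop f [] = 0 := by simp [Nop]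

lemma Nop_add (f g : Ten d) : Nop (f + g) = Nop f + Nop g := by
  funext w; simp [Nop, Finset.sum_add_distrib]

lemma Nop_neg (f : Ten d) : Nop (-f) = -Nop f := by
  funext w; simp [Nop]

lemma Nop_sub (f g : Ten d) : Nop (f - g) = Nop f - Nop g := by
  funext w; simp [Nop, Finset.sum_sub_distrib]

lemma Nop_smul (c : ℚ) (f : Ten d) : Nop (c • f) = c • Nop f := by
  funext w; simp [Nop, Finset.mul_sum]

lemma Nop_zero : Nop (0 : Ten d) = 0 := by funext w; simp [Nop]

def NopL : Ten d →ₗ[ℚ] Ten d where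
  toFun := Nop
  map_add' := Nop_add
  map_smul' := Nop_smul

lemma truncT_add (p : ℕ) (f g : Ten d) : truncT p (f + g) = truncT p f + truncT p g := by
  funext w; simp only [truncT, Pi.add_apply]; split <;> simp

lemma truncT_smul (p : ℕ) (c : ℚ) (f : Ten d) : truncT p (c • f) = c • truncT p f := by
  funext w; simp only [truncT, Pi.smul_apply]; split <;> simp

def truncL (p : ℕ) : Ten d →ₗ[ℚ] Ten d where
  toFun := truncT p
  map_add' := truncT_add p
  map_smul' := truncT_smul p

lemma truncT_idem (p : ℕ) (f : Ten d) : truncT p (truncT p f) = truncT p f := by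
  funext w; simp only [truncT]; split <;> simp_all

lemma Nop_truncT (p : ℕ) (f : Ten d) : Nop (truncT p f) = truncT p (Nop f) := by
  funext w
  simp only [Nop, truncT]
  by_cases h : w.length = p
  · rw [if_pos h]
    apply Finset.sum_congr rfl
    intro m _
    rw [if_pos (by rw [List.length_rotate]; exact h)]
  · rw [if_neg h]
    apply Finset.sum_eq_zero
    intro m _
    rw [if_neg (by rw [List.length_rotate]; exact h)]

lemma Nop_rotate_one (f : Ten d) (w : Word d) : Nop f (w.rotate 1) = Nop f w := by
  rcases w with _ | ⟨x, t⟩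
  · rfl
  set w := x :: t with hw
  simp only [Nop, List.length_rotate, List.rotate_rotate]
  have h1 : ∑ m ∈ Finset.range w.length, f (w.rotate (1 + m))
      = ∑ m ∈ Finset.range w.length, f (w.rotate (m + 1)) := by
    apply Finset.sum_congr rfl; intro m _; rw [Nat.add_comm]
  rw [h1]
  have h2 : w.length = t.length + 1 := by simp [hw]
  rw [h2]
  rw [Finset.sum_range_succ (fun m => f (w.rotate (m + 1))) t.length,
    Finset.sum_range_succ' (fun m => f (w.rotate m)) t.length]
  have h3 : w.rotate (t.length + 1) = w.rotate 0 := by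
    rw [← h2, List.rotate_length, List.rotate_zero]
  rw [h3]

lemma Nop_rotate (f : Ten d) (w : Word d) (k : ℕ) : Nop f (w.rotate k) = Nop f w := by
  induction k with
  | zero => rw [List.rotate_zero]
  | succ n ih =>
    have : w.rotate (n + 1) = (w.rotate n).rotate 1 := by rw [List.rotate_rotate]
    rw [this, Nop_rotate_one, ih]

-- ############ Section D : cyclicity ############

lemma Nop_mulT_comm (a b : Ten d) (ha : a [] = 0) (hb : b [] = 0) :
    Nop (mulT a b) = Nop (mulT b a) := by
  funext w
  set n := w.length with hn
  have key : ∀ (x y : Ten d), x [] = 0 → y [] = 0 →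
      Nop (mulT x y) w = ∑ q ∈ (Finset.range n) ×ˢ (Finset.Ioo 0 n),
        x ((w.rotate q.1).take q.2) * y ((w.rotate q.1).drop q.2) := by
    intro x y hx hy
    rw [Nop, ← hn, Finset.sum_product]
    apply Finset.sum_congr rfl
    intro m _
    rw [mulT]
    have hlen : (w.rotate m).length = n := by rw [List.length_rotate]
    rw [hlen]
    symm
    apply Finset.sum_subset
    · intro k hk
      simp only [Finset.mem_Ioo] at hk
      simp only [Finset.mem_range]
      omega
    · intro k hk1 hk2
      simp only [Finset.mem_range] at hk1
      simp only [Finset.mem_Ioo, not_and_or, not_lt] at hk2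
      rcases hk2 with h0 | h0
      · interval_cases k
        simp [hx]
      · have hkn : k = n := by omega
        subst hkn
        rw [List.drop_of_length_le (le_of_eq hlen), hy, mul_zero]
  rw [key a b ha hb, key b a hb ha]
  apply Finset.sum_nbij' (i := fun q => ((q.1 + q.2) % n, n - q.2))
    (j := fun q => ((q.1 + q.2) % n, n - q.2))
  · rintro ⟨m, k⟩ hq
    simp only [Finset.mem_product, Finset.mem_range, Finset.mem_Ioo] at hq ⊢
    have h0 : 0 < n := by omega
    exact ⟨Nat.mod_lt _ h0, by omega, by omega⟩
  · rintro ⟨m, k⟩ hq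
    simp only [Finset.mem_product, Finset.mem_range, Finset.mem_Ioo] at hq ⊢
    have h0 : 0 < n := by omega
    exact ⟨Nat.mod_lt _ h0, by omega, by omega⟩
  · rintro ⟨m, k⟩ hq
    simp only [Finset.mem_product, Finset.mem_range, Finset.mem_Ioo] at hq
    dsimp only
    rw [show n - (n - k) = k by omega, Nat.mod_add_mod,
      show m + k + (n - k) = m + n by omega, Nat.add_mod_right, Nat.mod_eq_of_lt hq.1]
  · rintro ⟨m, k⟩ hq
    simp only [Finset.mem_product, Finset.mem_range, Finset.mem_Ioo] at hq
    dsimp only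
    rw [show n - (n - k) = k by omega, Nat.mod_add_mod,
      show m + k + (n - k) = m + n by omega, Nat.add_mod_right, Nat.mod_eq_of_lt hq.1]
  · rintro ⟨m, k⟩ hq
    simp only [Finset.mem_product, Finset.mem_range, Finset.mem_Ioo] at hq
    dsimp only
    have hrot : w.rotate ((m + k) % n) = (w.rotate m).rotate k := by
      rw [List.rotate_rotate, hn, List.rotate_mod]
    rw [hrot]
    set u := w.rotate m with hu
    have hul : u.length = n := by rw [hu, List.length_rotate]
    have hreq : u.rotate k = u.drop k ++ u.take k :=
      List.rotate_eq_drop_append_take (by omega)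
    have htk : (u.rotate k).take (n - k) = u.drop k := by
      rw [hreq]; exact List.take_left' (by rw [List.length_drop]; omega)
    have hdk : (u.rotate k).drop (n - k) = u.take k := by
      rw [hreq]; exact List.drop_left' (by rw [List.length_drop]; omega)
    rw [htk, hdk, mul_comm]

-- ############ Section E : PhiWord, Nop of words ############

lemma PhiWord_cons (x : Fin d) (l : Word d) (h : l ≠ []) :
    PhiWord (x :: l) = brT (singT x) (PhiWord l) := by
  cases l with
  | nil => exact absurd rfl h
  | cons b m => rfl

lemma singT_apply_nil (i : Fin d) : singT i [] = 0 := by simp [singT]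

lemma wordT_apply_nil (u : Word d) (h : u ≠ []) : wordT u [] = 0 := by
  simp [wordT, Ne.symm h]

lemma PhiWord_apply_nil (w : Word d) : PhiWord w [] = 0 := by
  induction w with
  | nil => rfl
  | cons x l ih =>
    cases l with
    | nil => simp [PhiWord, singT]
    | cons b m =>
      rw [PhiWord_cons x _ (by simp)]
      simp [brT, mulT_apply_nil, singT_apply_nil, ih]

lemma Nop_wordT (u : Word d) :
    Nop (wordT u) = ∑ m ∈ Finset.range u.length, wordT (u.rotate m) := by
  funext w
  rw [Nop]
  have happ : (∑ m ∈ Finset.range u.length, wordT (u.rotate m)) w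
      = ∑ m ∈ Finset.range u.length, wordT (u.rotate m) w := by
    simp
  rw [happ]
  by_cases hlen : w.length = u.length
  case neg =>
    rw [Finset.sum_eq_zero, Finset.sum_eq_zero]
    · intro m _
      have : w ≠ u.rotate m := by
        intro h; apply hlen
        rw [h, List.length_rotate]
      simp [wordT, this]
    · intro m _
      have : w.rotate m ≠ u := by
        intro h; apply hlen
        rw [← h, List.length_rotate]
      simp [wordT, this]
  case pos =>
    set n := u.length with hnu
    apply Finset.sum_nbij' (i := fun m => (n - m) % n) (j := fun m => (n - m) % n)
    · intro m hm
      rw [hlen] at hm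
      simp only [Finset.mem_range] at hm ⊢
      exact Nat.mod_lt _ (by omega)
    · intro m hm
      simp only [Finset.mem_range] at hm
      rw [hlen]
      simp only [Finset.mem_range]
      exact Nat.mod_lt _ (by omega)
    · intro m hm
      rw [hlen] at hm
      simp only [Finset.mem_range] at hm
      rcases Nat.eq_zero_or_pos m with h0 | h0
      · subst h0; rw [Nat.sub_zero, Nat.mod_self, Nat.sub_zero, Nat.mod_self]
      · have h1 : (n - m) % n = n - m := Nat.mod_eq_of_lt (by omega)
        rw [h1, show n - (n - m) = m by omega]
        exact Nat.mod_eq_of_lt hm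
    · intro m hm
      simp only [Finset.mem_range] at hm
      rcases Nat.eq_zero_or_pos m with h0 | h0
      · subst h0; rw [Nat.sub_zero, Nat.mod_self, Nat.sub_zero, Nat.mod_self]
      · have h1 : (n - m) % n = n - m := Nat.mod_eq_of_lt (by omega)
        rw [h1, show n - (n - m) = m by omega]
        exact Nat.mod_eq_of_lt hm
    · intro m hm
      rw [hlen] at hm
      simp only [Finset.mem_range] at hm
      have hiff : w.rotate m = u ↔ w = u.rotate ((n - m) % n) := by
        constructor
        · intro h
          rw [← h, List.rotate_rotate]
          rcases Nat.eq_zero_or_pos m with h0 | h0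
          · subst h0; rw [Nat.sub_zero, Nat.mod_self, Nat.add_zero, List.rotate_zero]
          · rw [Nat.mod_eq_of_lt (by omega), show m + (n - m) = n by omega, ← hlen,
              List.rotate_length]
        · intro h
          rw [h, List.rotate_rotate]
          rcases Nat.eq_zero_or_pos m with h0 | h0
          · subst h0; rw [Nat.sub_zero, Nat.mod_self, Nat.zero_add, List.rotate_zero]
          · rw [Nat.mod_eq_of_lt (by omega), show n - m + m = n by omega, List.rotate_length]
      simp only [wordT]
      rw [if_congr hiff rfl rfl]

-- ############ Section F : hT and tailTerms ############

def hT (v : Ten d) : Word d → Ten d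
  | [] => 0
  | x :: rest => mulT (singT x) (mulT (wordT rest) v) + hT (mulT v (singT x)) rest

def tailTerms (z : Ten d) : Word d → Ten d
  | [] => 0
  | [c] => mulT (singT c) z
  | c :: c' :: l' => mulT (singT c) (-brT z (PhiWord (c' :: l')))
      + tailTerms (brT z (singT c)) (c' :: l')

lemma hT_sub (a : Word d) : ∀ v v' : Ten d, hT (v - v') a = hT v a - hT v' a := by
  induction a with
  | nil => intro v v'; simp [hT]
  | cons x rest ih =>
    intro v v'
    simp only [hT, mulT_sub_right, mulT_sub_left, ih]
    abel

lemma brT_sub_left (x y z : Ten d) : brT (x - y) z = brT x z - brT y z := by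
  simp only [brT, mulT_sub_left, mulT_sub_right]
  abel

lemma tailTerms_sub (l : Word d) : ∀ z z' : Ten d,
    tailTerms (z - z') l = tailTerms z l - tailTerms z' l := by
  induction l with
  | nil => intro z z'; simp [tailTerms]
  | cons c t ih =>
    intro z z'
    cases t with
    | nil => simp [tailTerms, mulT_sub_right]
    | cons c' l' =>
      simp only [tailTerms, brT_sub_left, mulT_sub_right, ih, neg_sub, mulT_neg_right]
      abel

lemma rotsum (u : Word d) : ∀ a : Word d,
    ∑ m ∈ Finset.range (a.length + 1), wordT ((a ++ u).rotate m)
      = hT (wordT u) a + wordT (u ++ a) := by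
  have main : ∀ (n : ℕ) (a u : Word d), a.length ≤ n →
      ∑ m ∈ Finset.range (a.length + 1), wordT ((a ++ u).rotate m)
        = hT (wordT u) a + wordT (u ++ a) := by
    intro n
    induction n with
    | zero =>
      intro a u ha
      have : a = [] := List.length_eq_zero_iff.mp (by omega)
      subst this
      simp [hT, wordT]
    | succ n ih =>
      intro a u ha
      cases a with
      | nil => simp [hT, wordT]
      | cons x rest =>
        have hlen : (x :: rest).length = rest.length + 1 := by simp
        rw [hlen]
        rw [Finset.sum_range_succ' (fun m => wordT (((x :: rest) ++ u).rotate m)) (rest.length + 1)]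
        have hrot : ∀ m, ((x :: rest) ++ u).rotate (m + 1) = ((rest ++ (u ++ [x]))).rotate m := by
          intro m
          have : (x :: rest) ++ u = x :: (rest ++ u) := rfl
          rw [this, List.rotate_cons_succ]
          congr 1
          rw [List.append_assoc]
        have hsum : ∑ m ∈ Finset.range (rest.length + 1),
            wordT (((x :: rest) ++ u).rotate (m + 1))
            = ∑ m ∈ Finset.range (rest.length + 1), wordT ((rest ++ (u ++ [x])).rotate m) := by
          apply Finset.sum_congr rfl
          intro m _
          rw [hrot m]
        rw [hsum]
        rw [ih rest (u ++ [x]) (by simp at ha ⊢; omega)]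
        rw [List.rotate_zero]
        have e1 : wordT (u ++ [x]) = mulT (wordT u) (singT x) := by
          rw [singT_eq_wordT, wordT_mulT]
        have e2 : wordT ((u ++ [x]) ++ rest) = wordT (u ++ (x :: rest)) := by
          rw [List.append_assoc]; rfl
        have e3 : wordT ((x :: rest) ++ u) = mulT (singT x) (mulT (wordT rest) (wordT u)) := by
          rw [wordT_mulT, singT_eq_wordT, wordT_mulT]; rfl
        rw [e1, e2, e3]
        show hT (mulT (wordT u) (singT x)) rest + wordT (u ++ x :: rest)
            + mulT (singT x) (mulT (wordT rest) (wordT u))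
          = hT (wordT u) (x :: rest) + wordT (u ++ x :: rest)
        rw [hT]
        abel
  intro a
  exact main a.length a u le_rfl

-- ############ Section G : the key formula ############

lemma hT_append (c : Fin d) (a : Word d) : ∀ v : Ten d,
    hT v (a ++ [c]) = hT (mulT (singT c) v) a + mulT (singT c) (mulT v (wordT a)) := by
  induction a with
  | nil =>
    intro v
    show mulT (singT c) (mulT (wordT []) v) + hT (mulT v (singT c)) [] = _
    rw [← oneT_eq_wordT, oneT_mulT]
    show mulT (singT c) v + 0 = 0 + mulT (singT c) (mulT v (wordT []))
    rw [← oneT_eq_wordT, mulT_oneT, zero_add, add_zero]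
  | cons x rest ih =>
    intro v
    show mulT (singT x) (mulT (wordT (rest ++ [c])) v) + hT (mulT v (singT x)) (rest ++ [c]) = _
    rw [ih (mulT v (singT x))]
    have e1 : wordT (rest ++ [c]) = mulT (wordT rest) (singT c) := by
      rw [singT_eq_wordT, wordT_mulT]
    rw [e1]
    show _ = mulT (singT x) (mulT (wordT rest) (mulT (singT c) v))
        + hT (mulT (mulT (singT c) v) (singT x)) rest
        + mulT (singT c) (mulT v (wordT (x :: rest)))
    have e2 : wordT (x :: rest) = mulT (singT x) (wordT rest) := by
      rw [singT_eq_wordT, wordT_mulT]; rfl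
    rw [e2]
    simp only [mulT_assoc]
    abel

lemma formula : ∀ (l : Word d), l ≠ [] → ∀ (a : Word d), a ≠ [] →
    Nop (mulT (wordT a) (PhiWord l)) = hT (PhiWord l) a + tailTerms (wordT a) l := by
  intro l
  induction l with
  | nil => intro h; exact absurd rfl h
  | cons c t ih =>
    intro _ a ha
    cases t with
    | nil =>
      show Nop (mulT (wordT a) (singT c)) = hT (singT c) a + tailTerms (wordT a) [c]
      rw [singT_eq_wordT, wordT_mulT, Nop_wordT]
      have hlen : (a ++ [c]).length = a.length + 1 := by simp
      rw [hlen, rotsum [c] a]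
      rw [← singT_eq_wordT]
      show hT (singT c) a + wordT (c :: a) = hT (singT c) a + tailTerms (wordT a) [c]
      show hT (singT c) a + wordT (c :: a) = hT (singT c) a + mulT (singT c) (wordT a)
      rw [singT_eq_wordT, wordT_mulT]; rfl
    | cons c' l'' =>
      set l₀ : Word d := c' :: l'' with hl₀
      have hl₀ne : l₀ ≠ [] := by simp [hl₀]
      set P : Ten d := PhiWord l₀ with hP
      have hPhi : PhiWord (c :: l₀) = brT (singT c) P := PhiWord_cons c l₀ hl₀ne
      rw [hPhi]
      have hbz : ∀ u : Word d, u ≠ [] → mulT (wordT u) P [] = 0 := by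
        intro u hu
        rw [mulT_apply_nil, wordT_apply_nil u hu, zero_mul]
      have expand : mulT (wordT a) (brT (singT c) P)
          = mulT (wordT (a ++ [c])) P - mulT (mulT (wordT a) P) (singT c) := by
        rw [brT, mulT_sub_right, ← mulT_assoc, ← mulT_assoc]
        rw [show mulT (wordT a) (singT c) = wordT (a ++ [c]) by rw [singT_eq_wordT, wordT_mulT]]
      rw [expand, Nop_sub]
      have cyc : Nop (mulT (mulT (wordT a) P) (singT c))
          = Nop (mulT (wordT (c :: a)) P) := by
        rw [Nop_mulT_comm _ _ (hbz a ha) (singT_apply_nil c), ← mulT_assoc]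
        rw [show mulT (singT c) (wordT a) = wordT (c :: a) by
          rw [singT_eq_wordT, wordT_mulT]; rfl]
      rw [cyc]
      rw [ih (by simp [hl₀]) (a ++ [c]) (by simp), ih (by simp [hl₀]) (c :: a) (by simp)]
      rw [hT_append c a P]
      have hTcons : hT P (c :: a) = mulT (singT c) (mulT (wordT a) P) + hT (mulT P (singT c)) a := rfl
      rw [hTcons]
      have htt : tailTerms (wordT a) (c :: l₀)
          = mulT (singT c) (-brT (wordT a) P) + tailTerms (brT (wordT a) (singT c)) l₀ := rfl
      rw [htt]
      have hsub : hT (mulT (singT c) P) a - hT (mulT P (singT c)) a = hT (brT (singT c) P) a := by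
        rw [← hT_sub]; rfl
      have tsub : tailTerms (wordT (a ++ [c])) l₀ - tailTerms (wordT (c :: a)) l₀
          = tailTerms (brT (wordT a) (singT c)) l₀ := by
        rw [← tailTerms_sub]
        rw [brT, show mulT (wordT a) (singT c) = wordT (a ++ [c]) by
            rw [singT_eq_wordT, wordT_mulT],
          show mulT (singT c) (wordT a) = wordT (c :: a) by
            rw [singT_eq_wordT, wordT_mulT]; rfl]
      have hneg : mulT (singT c) (-brT (wordT a) P)
          = mulT (singT c) (mulT P (wordT a)) - mulT (singT c) (mulT (wordT a) P) := by
        rw [mulT_neg_right, brT, mulT_sub_right]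
        abel
      rw [← hsub, ← tsub, hneg]
      abel

-- ############ Section H : Lie spans ############

def LieSpan (d : ℕ) : Submodule ℚ (Ten d) :=
  Submodule.span ℚ {g : Ten d | ∃ w : Word d, g = PhiWord w}

def SpanHL (d : ℕ) : Submodule ℚ (Ten d) :=
  Submodule.span ℚ {g : Ten d | ∃ (j : Fin d) (w : Word d), g = mulT (singT j) (PhiWord w)}

lemma brT_add_right (x y z : Ten d) : brT x (y + z) = brT x y + brT x z := by
  simp only [brT, mulT_add_left, mulT_add_right]; abel

lemma brT_smul_right (c : ℚ) (x y : Ten d) : brT x (c • y) = c • brT x y := by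
  simp only [brT, mulT_smul_left, mulT_smul_right, smul_sub]

lemma brT_zero_right (x : Ten d) : brT x 0 = 0 := by
  simp [brT, mulT_zero_left, mulT_zero_right]

lemma brT_zero_left (x : Ten d) : brT 0 x = 0 := by
  simp [brT, mulT_zero_left, mulT_zero_right]

lemma brT_neg_of_swap (x y : Ten d) : brT x y = -brT y x := by
  simp only [brT]; abel

lemma jacobi (a b c : Ten d) :
    brT (brT a b) c = brT a (brT b c) - brT b (brT a c) := by
  simp only [brT, mulT_sub_left, mulT_sub_right, mulT_assoc]
  abel

lemma PhiWord_mem_LieSpan (w : Word d) : PhiWord w ∈ LieSpan d :=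
  Submodule.subset_span ⟨w, rfl⟩

lemma brX_mem (i : Fin d) {z : Ten d} (hz : z ∈ LieSpan d) :
    brT (singT i) z ∈ LieSpan d := by
  induction hz using Submodule.span_induction with
  | mem x hx =>
    obtain ⟨w, rfl⟩ := hx
    cases w with
    | nil => rw [show (PhiWord [] : Ten d) = 0 from rfl, brT_zero_right]; exact zero_mem _
    | cons b m =>
      rw [← PhiWord_cons i _ (by simp)]
      exact PhiWord_mem_LieSpan _
  | zero => rw [brT_zero_right]; exact zero_mem _
  | add x y hx hy ihx ihy => rw [brT_add_right]; exact add_mem ihx ihy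
  | smul c x hx ihx => rw [brT_smul_right]; exact Submodule.smul_mem _ _ ihx

lemma brPhi_mem (w : Word d) : ∀ z : Ten d, z ∈ LieSpan d → brT (PhiWord w) z ∈ LieSpan d := by
  induction w with
  | nil => intro z hz; rw [show (PhiWord [] : Ten d) = 0 from rfl, brT_zero_left]; exact zero_mem _
  | cons x u ih =>
    intro z hz
    cases u with
    | nil => exact brX_mem x hz
    | cons c' l'' =>
      rw [PhiWord_cons x _ (by simp), jacobi]
      exact sub_mem (brX_mem x (ih z hz)) (ih _ (brX_mem x hz))

lemma brPhi_mem_right {z : Ten d} (w : Word d) (hz : z ∈ LieSpan d) :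
    brT z (PhiWord w) ∈ LieSpan d := by
  rw [brT_neg_of_swap]
  exact neg_mem (brPhi_mem w z hz)

lemma brSing_mem_right {z : Ten d} (i : Fin d) (hz : z ∈ LieSpan d) :
    brT z (singT i) ∈ LieSpan d := by
  have : singT i = PhiWord [i] := rfl
  rw [this]
  exact brPhi_mem_right [i] hz

lemma mulSing_mem (j : Fin d) {z : Ten d} (hz : z ∈ LieSpan d) :
    mulT (singT j) z ∈ SpanHL d := by
  induction hz using Submodule.span_induction with
  | mem x hx =>
    obtain ⟨w, rfl⟩ := hx
    exact Submodule.subset_span ⟨j, w, rfl⟩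
  | zero => rw [mulT_zero_right]; exact zero_mem _
  | add x y hx hy ihx ihy => rw [mulT_add_right]; exact add_mem ihx ihy
  | smul c x hx ihx => rw [mulT_smul_right]; exact Submodule.smul_mem _ _ ihx

lemma tailTerms_mem (l : Word d) : ∀ z : Ten d, z ∈ LieSpan d → tailTerms z l ∈ SpanHL d := by
  induction l with
  | nil => intro z hz; exact zero_mem _
  | cons c t ih =>
    intro z hz
    cases t with
    | nil => exact mulSing_mem c hz
    | cons c' l'' =>
      show mulT (singT c) (-brT z (PhiWord (c' :: l'')))
          + tailTerms (brT z (singT c)) (c' :: l'') ∈ SpanHL d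
      exact add_mem (mulSing_mem c (neg_mem (brPhi_mem_right _ hz)))
        (ih _ (brSing_mem_right c hz))

lemma base_mem (i : Fin d) (l : Word d) :
    Nop (mulT (singT i) (PhiWord l)) ∈ SpanHL d := by
  cases l with
  | nil =>
    rw [show (PhiWord [] : Ten d) = 0 from rfl, mulT_zero_right, Nop_zero]
    exact zero_mem _
  | cons c t =>
    rw [singT_eq_wordT, formula (c :: t) (by simp) [i] (by simp)]
    apply add_mem
    · have : hT (PhiWord (c :: t)) [i]
          = mulT (singT i) (mulT (wordT []) (PhiWord (c :: t))) + hT (mulT (PhiWord (c::t)) (singT i)) [] := rfl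
      rw [this, show hT (mulT (PhiWord (c::t)) (singT i)) [] = (0 : Ten d) from rfl, add_zero,
        ← oneT_eq_wordT, oneT_mulT]
      exact Submodule.subset_span ⟨i, c :: t, rfl⟩
    · rw [← singT_eq_wordT]
      exact tailTerms_mem _ _ (PhiWord_mem_LieSpan [i])

lemma core_words : ∀ w1 w2 : Word d, Nop (mulT (PhiWord w1) (PhiWord w2)) ∈ SpanHL d := by
  intro w1
  induction w1 with
  | nil =>
    intro w2
    rw [show (PhiWord [] : Ten d) = 0 from rfl, mulT_zero_left, Nop_zero]
    exact zero_mem _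
  | cons i u ih =>
    intro w2
    cases u with
    | nil => exact base_mem i w2
    | cons b m =>
      set u : Word d := b :: m with hu
      cases w2 with
      | nil =>
        rw [show (PhiWord [] : Ten d) = 0 from rfl, mulT_zero_right, Nop_zero]
        exact zero_mem _
      | cons e s =>
        set w2 : Word d := e :: s with hw2
        have hPu : PhiWord u [] = 0 := PhiWord_apply_nil u
        have hP2 : PhiWord w2 [] = 0 := PhiWord_apply_nil w2
        have red : Nop (mulT (PhiWord (i :: u)) (PhiWord w2))
            = -Nop (mulT (PhiWord u) (PhiWord (i :: w2))) := by
          rw [PhiWord_cons i u (by simp [hu]), PhiWord_cons i w2 (by simp [hw2])]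
          rw [brT, mulT_sub_left, Nop_sub, mulT_assoc]
          have cyc : Nop (mulT (singT i) (mulT (PhiWord u) (PhiWord w2)))
              = Nop (mulT (PhiWord u) (mulT (PhiWord w2) (singT i))) := by
            rw [Nop_mulT_comm _ _ (singT_apply_nil i)
              (by rw [mulT_apply_nil, hPu, zero_mul]), mulT_assoc]
          rw [cyc, mulT_assoc, ← Nop_sub, ← mulT_sub_right]
          rw [show mulT (PhiWord w2) (singT i) - mulT (singT i) (PhiWord w2)
              = -brT (singT i) (PhiWord w2) by rw [brT]; abel]
          rw [mulT_neg_right, Nop_neg]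
        rw [red]
        exact neg_mem (ih (i :: w2))

lemma core_span {x y : Ten d} (hx : x ∈ LieSpan d) (hy : y ∈ LieSpan d) :
    Nop (mulT x y) ∈ SpanHL d := by
  induction hx, hy using Submodule.span_induction₂ with
  | mem_mem a b ha hb =>
    obtain ⟨w1, rfl⟩ := ha
    obtain ⟨w2, rfl⟩ := hb
    exact core_words w1 w2
  | zero_left b hb => rw [mulT_zero_left, Nop_zero]; exact zero_mem _
  | zero_right a ha => rw [mulT_zero_right, Nop_zero]; exact zero_mem _
  | add_left a b c ha hb hc ih1 ih2 => rw [mulT_add_left, Nop_add]; exact add_mem ih1 ih2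
  | add_right a b c ha hb hc ih1 ih2 => rw [mulT_add_right, Nop_add]; exact add_mem ih1 ih2
  | smul_left r a b ha hb ih => rw [mulT_smul_left, Nop_smul]; exact Submodule.smul_mem _ _ ih
  | smul_right r a b ha hb ih => rw [mulT_smul_right, Nop_smul]; exact Submodule.smul_mem _ _ ih


-- ############ Section J : homogeneity ############

def homogT (p : ℕ) (f : Ten d) : Prop := ∀ w : Word d, w.length ≠ p → f w = 0

lemma homogT_singT (i : Fin d) : homogT 1 (singT i) := by
  intro w hw
  have : w ≠ [i] := by rintro rfl; simp at hw
  simp [singT, this]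

lemma homogT_mulT {p q : ℕ} {f g : Ten d} (hf : homogT p f) (hg : homogT q g) :
    homogT (p + q) (mulT f g) := by
  intro w hw
  rw [mulT]
  apply Finset.sum_eq_zero
  intro k hk
  simp only [Finset.mem_range] at hk
  by_cases h1 : (w.take k).length = p
  · have h2 : (w.drop k).length ≠ q := by
      rw [List.length_drop]
      rw [List.length_take] at h1
      omega
    rw [hg _ h2, mul_zero]
  · rw [hf _ h1, zero_mul]

lemma homogT_brT {p q : ℕ} {f g : Ten d} (hf : homogT p f) (hg : homogT q g) :
    homogT (p + q) (brT f g) := by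
  intro w hw
  have h1 := homogT_mulT hf hg w hw
  have h2 := homogT_mulT hg hf w (by omega)
  simp only [brT, Pi.sub_apply, h1, h2, sub_zero]

lemma homogT_PhiWord (w : Word d) : homogT w.length (PhiWord w) := by
  induction w with
  | nil => intro u hu; rfl
  | cons x t ih =>
    cases t with
    | nil => exact homogT_singT x
    | cons b m =>
      rw [PhiWord_cons x _ (by simp)]
      have : (x :: b :: m).length = 1 + (b :: m).length := by simp; omega
      rw [this]
      exact homogT_brT (homogT_singT x) ih

lemma truncT_eq_self {p : ℕ} {f : Ten d} (hf : homogT p f) : truncT p f = f := by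
  funext w
  rw [truncT]
  split
  · rfl
  · exact (hf w (by assumption)).symm

lemma truncT_eq_zero {p q : ℕ} {f : Ten d} (hf : homogT q f) (h : q ≠ p) : truncT p f = 0 := by
  funext w
  rw [truncT]
  split
  · exact hf w (by omega)
  · rfl

lemma memLhat_PhiWord (w : Word d) : memLhat (PhiWord w) := by
  intro p
  by_cases h : w.length = p
  · rw [← h, truncT_eq_self (homogT_PhiWord w)]
    exact Submodule.subset_span ⟨w, rfl, rfl⟩
  · rw [truncT_eq_zero (homogT_PhiWord w) h]
    exact zero_mem _

lemma deg1_singT (i : Fin d) : deg1 (singT i) := by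
  intro w hw
  have : w ≠ [i] := by rintro rfl; simp at hw
  simp [singT, this]

lemma memLhat_of_deg1 {f : Ten d} (hf : deg1 f) : memLhat f := by
  intro p
  by_cases h : p = 1
  · subst h
    have : truncT 1 f = ∑ i : Fin d, f [i] • singT i := by
      funext w
      rw [truncT, Finset.sum_apply]
      by_cases hw : w.length = 1
      · rw [if_pos hw]
        obtain ⟨j, rfl⟩ := List.length_eq_one_iff.mp hw
        rw [Finset.sum_eq_single j]
        · simp [singT]
        · intro i _ hij
          have : [j] ≠ [i] := by simpa using (hij.symm)
          simp [singT, this]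
        · intro h; simp at h
      · rw [if_neg hw]
        symm
        apply Finset.sum_eq_zero
        intro i _
        have : w ≠ [i] := by rintro rfl; simp at hw
        simp [singT, this]
    rw [this]
    apply Submodule.sum_mem
    intro i _
    apply Submodule.smul_mem
    exact Submodule.subset_span ⟨[i], rfl, rfl⟩
  · have : truncT p f = 0 := by
      funext w
      rw [truncT]
      split
      · exact hf w (by omega)
      · rfl
    rw [this]
    exact zero_mem _

-- ############ Section K : truncation of products ############

lemma trunc_mulT (p : ℕ) (f g : Ten d) :
    truncT p (mulT f g)
      = ∑ a ∈ Finset.range (p + 1), mulT (truncT a f) (truncT (p - a) g) := by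
  funext w
  rw [truncT, Finset.sum_apply]
  by_cases h : w.length = p
  · rw [if_pos h, mulT]
    have hsum : ∀ a ∈ Finset.range (p + 1),
        mulT (truncT a f) (truncT (p - a) g) w
          = f (w.take a) * g (w.drop a) := by
      intro a ha
      simp only [Finset.mem_range] at ha
      rw [mulT]
      rw [Finset.sum_eq_single a]
      · have h1 : (w.take a).length = a := by rw [List.length_take]; omega
        have h2 : (w.drop a).length = p - a := by rw [List.length_drop, h]
        simp only [truncT]
        rw [if_pos h1, if_pos h2]
      · intro k hk hka
        simp only [Finset.mem_range] at hk
        have h1 : (w.take k).length ≠ a := by rw [List.length_take]; omega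
        simp only [truncT]
        rw [if_neg h1, zero_mul]
      · intro hc
        exfalso; apply hc
        simp only [Finset.mem_range]; omega
    rw [Finset.sum_congr rfl hsum, h]
  · rw [if_neg h]
    symm
    apply Finset.sum_eq_zero
    intro a ha
    simp only [Finset.mem_range] at ha
    rw [mulT]
    apply Finset.sum_eq_zero
    intro k hk
    simp only [Finset.mem_range] at hk
    by_cases h1 : (w.take k).length = a
    · have h2 : (w.drop k).length ≠ p - a := by
        rw [List.length_drop]
        rw [List.length_take] at h1
        omega
      simp only [truncT]
      rw [if_neg h2, mul_zero]
    · simp only [truncT]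
      rw [if_neg h1, zero_mul]

-- ############ Section L : assembly ############

lemma LieN_le_LieSpan (p : ℕ) : LieN d p ≤ LieSpan d := by
  apply Submodule.span_mono
  rintro g ⟨w, _, hg⟩
  exact ⟨w, hg⟩

lemma SpanHL_le_HL : SpanHL d ≤ Submodule.span ℚ
    {g : Ten d | ∃ X v : Ten d, deg1 X ∧ memLhat v ∧ g = mulT X v} := by
  apply Submodule.span_le.mpr
  rintro g ⟨j, w, rfl⟩
  exact Submodule.subset_span ⟨singT j, PhiWord w, deg1_singT j, memLhat_PhiWord w, rfl⟩

lemma HL_le_LL : Submodule.span ℚ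
    {g : Ten d | ∃ X v : Ten d, deg1 X ∧ memLhat v ∧ g = mulT X v}
    ≤ Submodule.span ℚ
    {g : Ten d | ∃ u v : Ten d, memLhat u ∧ memLhat v ∧ g = mulT u v} := by
  apply Submodule.span_le.mpr
  rintro g ⟨X, v, hX, hv, rfl⟩
  exact Submodule.subset_span ⟨X, v, memLhat_of_deg1 hX, hv, rfl⟩

lemma brMap_Nop (g : Ten d) : brMap (Nop g) = 0 := by
  funext w
  show Nop g w - Nop g (w.rotate (w.length - 1)) = 0
  rw [Nop_rotate, sub_self]

lemma forward_memHL {g : Ten d} (hg : memLLhat g) : memHLhat (Nop g) := by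
  intro p
  have key : truncT p g ∈ Submodule.comap ((truncL p).comp (NopL (d := d)))
      (Submodule.span ℚ {h : Ten d | ∃ X v : Ten d, deg1 X ∧ memLhat v ∧ h = mulT X v}) := by
    apply Submodule.span_le.mpr _ (hg p)
    rintro h ⟨u, v, hu, hv, rfl⟩
    simp only [SetLike.mem_coe, Submodule.mem_comap, LinearMap.comp_apply]
    show truncT p (Nop (mulT u v)) ∈ _
    rw [← Nop_truncT, trunc_mulT]
    have hmap : Nop (∑ a ∈ Finset.range (p + 1), mulT (truncT a u) (truncT (p - a) v))
        = ∑ a ∈ Finset.range (p + 1), Nop (mulT (truncT a u) (truncT (p - a) v)) :=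
      map_sum (NopL (d := d)) _ _
    rw [hmap]
    apply Submodule.sum_mem
    intro a _
    apply SpanHL_le_HL
    exact core_span (LieN_le_LieSpan a (hu a)) (LieN_le_LieSpan (p - a) (hv (p - a)))
  simp only [Submodule.mem_comap, LinearMap.comp_apply] at key
  have e : truncT p (Nop g) = truncL p ((NopL (d := d)) (truncT p g)) := by
    show truncT p (Nop g) = truncT p (Nop (truncT p g))
    rw [Nop_truncT, truncT_idem]
  rw [e]
  exact key


/-- The image of `𝓛̂ ⊗̂ 𝓛̂` under the cyclic symmetrization
operator `N` equals the kernel of the bracket map `H ⊗ 𝓛̂ → 𝓛̂`,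
`X ⊗ u ↦ [X,u]`. -/
theorem Nop_image_LL_eq_ker_bracket (d : ℕ) :
    {f : Ten d | ∃ g : Ten d, memLLhat g ∧ Nop g = f}
      = {f : Ten d | memHLhat f ∧ brMap f = 0} := by
  ext f
  simp only [Set.mem_setOf_eq]
  constructor
  · rintro ⟨g, hg, rfl⟩
    exact ⟨forward_memHL hg, brMap_Nop g⟩
  · rintro ⟨hH, hB⟩
    -- f vanishes on the empty word
    have hnil : f [] = 0 := by
      have h0 := hH 0
      have hker : Submodule.span ℚ
          {g : Ten d | ∃ X v : Ten d, deg1 X ∧ memLhat v ∧ g = mulT X v}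
          ≤ LinearMap.ker (LinearMap.proj (R := ℚ) (φ := fun _ : Word d => ℚ) ([] : Word d)) := by
        apply Submodule.span_le.mpr
        rintro g ⟨X, v, hX, hv, rfl⟩
        simp only [SetLike.mem_coe, LinearMap.mem_ker, LinearMap.proj_apply]
        rw [mulT_apply_nil, hX [] (by simp), zero_mul]
      have := hker h0
      simp only [LinearMap.mem_ker, LinearMap.proj_apply] at this
      have he : truncT 0 f [] = f [] := by rw [truncT]; simp
      rw [he] at this
      exact this
    -- f is invariant under rotations
    have hone : ∀ w : Word d, f w = f (w.rotate (w.length - 1)) := by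
      intro w
      have := congrFun hB w
      simp only [brMap, Pi.zero_apply] at this
      linarith [this]
    have hrot : ∀ (m : ℕ) (w : Word d), f (w.rotate m) = f w := by
      intro m
      induction m with
      | zero => intro w; rw [List.rotate_zero]
      | succ k ih =>
        intro w
        rcases Nat.eq_zero_or_pos w.length with h0 | h0
        · have : w = [] := List.length_eq_zero_iff.mp h0
          subst this
          simp [List.rotate_nil]
        · have h1 := hone (w.rotate (k + 1))
          rw [List.length_rotate, List.rotate_rotate] at h1
          have h2 : k + 1 + (w.length - 1) = k + w.length := by omega
          rw [h2] at h1
          have h3 : w.rotate (k + w.length) = w.rotate k := by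
            rw [← List.rotate_rotate,
              show w.length = (w.rotate k).length from (List.length_rotate w k).symm,
              List.rotate_length]
          rw [h3] at h1
          rw [h1, ih w]
    -- the preimage
    set g : Ten d := fun w => (w.length : ℚ)⁻¹ * f w with hgdef
    refine ⟨g, ?_, ?_⟩
    · intro p
      have e : truncT p g = (p : ℚ)⁻¹ • truncT p f := by
        funext w
        simp only [truncT, Pi.smul_apply, smul_eq_mul, hgdef]
        split
        · rename_i h; rw [h]
        · rw [mul_zero]
      rw [e]
      exact Submodule.smul_mem _ _ (HL_le_LL (hH p))
    · funext w
      rcases Nat.eq_zero_or_pos w.length with h0 | h0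
      · have : w = [] := List.length_eq_zero_iff.mp h0
        subst this
        rw [Nop_apply_nil, hnil]
      · rw [Nop]
        have he : ∀ m ∈ Finset.range w.length, g (w.rotate m) = (w.length : ℚ)⁻¹ * f w := by
          intro m _
          show ((w.rotate m).length : ℚ)⁻¹ * f (w.rotate m) = _
          rw [List.length_rotate, hrot m w]
        rw [Finset.sum_congr rfl he, Finset.sum_const, Finset.card_range]
        rw [nsmul_eq_mul, ← mul_assoc,
          mul_inv_cancel₀ (show (w.length : ℚ) ≠ 0 from Nat.cast_ne_zero.mpr (by omega)), one_mul]


end Paper
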